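/- Let F be a finite abelian group (written additively) and M a commutative additive monoid, and let F̂ = Hom(F, ℂˣ) denote the character group of F. Then the ℂ-algebra homomorphism Φ : ℂ[F × M] → ∏_{χ ∈ F̂} ℂ[M] from the monoid algebra of F × M to the product of copies of the monoid algebra of M, determined on basis elements by Φ(e_{(f,m)}) = (χ(f)·e_m)_{χ ∈ F̂}, is bijective. -/

import Mathlib

open Finset

noncomputable section CharAux

variable {F : Type*} [AddCommGroup F] [Fintype F]

/-- The equivalence between `ℂˣ`-valued and `ℂ`-valued additive characters. -/
def unitsCharEquiv (F : Type*) [AddCommGroup F] :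
    AddChar F ℂˣ ≃ AddChar F ℂ where
  toFun χ := (Units.coeHom ℂ).compAddChar χ
  invFun ψ :=
    { toFun := fun f => ⟨ψ f, ψ (-f),
        by rw [← ψ.map_add_eq_mul]; simp,
        by rw [← ψ.map_add_eq_mul]; simp⟩
      map_zero_eq_one' := by ext; simp
      map_add_eq_mul' := fun a b => by ext; simp [ψ.map_add_eq_mul, neg_add] }
  left_inv χ := by ext f; exact rfl
  right_inv ψ := by ext f; rfl

omit [Fintype F] in
@[simp] lemma unitsCharEquiv_apply (χ : AddChar F ℂˣ) (f : F) :
    unitsCharEquiv F χ f = (χ f : ℂ) := rfl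

omit [Fintype F] in
lemma unitsCharEquiv_eq_zero_iff (χ : AddChar F ℂˣ) :
    unitsCharEquiv F χ = 0 ↔ χ = 1 := by
  constructor
  · intro h
    ext f
    have h2 := DFunLike.congr_fun h f
    rw [unitsCharEquiv_apply, AddChar.zero_apply] at h2
    simpa using h2
  · rintro rfl
    ext f
    simp

/-- First orthogonality: a nontrivial character sums to zero over the group. -/
lemma sum_units_char_eq_zero (χ : AddChar F ℂˣ) (hχ : χ ≠ 1) :
    ∑ f : F, (χ f : ℂ) = 0 := by
  classical
  have h := AddChar.sum_eq_ite (unitsCharEquiv F χ)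
  rw [if_neg (fun hc => hχ ((unitsCharEquiv_eq_zero_iff χ).1 hc))] at h
  simpa using h

noncomputable instance : Fintype (AddChar F ℂˣ) :=
  Fintype.ofEquiv _ (unitsCharEquiv F).symm

lemma card_units_char : Fintype.card (AddChar F ℂˣ) = Fintype.card F := by
  rw [Fintype.card_congr (unitsCharEquiv F)]
  exact AddChar.card_eq

/-- Second orthogonality: nontrivial sum over characters vanishes. -/
lemma sum_units_chars_eq_zero (f : F) (hf : f ≠ 0) :
    ∑ χ : AddChar F ℂˣ, (χ f : ℂ) = 0 := by
  classical
  rw [← Equiv.sum_comp (unitsCharEquiv F).symm (fun χ : AddChar F ℂˣ => (χ f : ℂ))]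
  have h : ∀ ψ : AddChar F ℂ, (((unitsCharEquiv F).symm ψ) f : ℂ) = ψ f := by
    intro ψ
    have := unitsCharEquiv_apply ((unitsCharEquiv F).symm ψ) f
    rwa [Equiv.apply_symm_apply] at this
  simp_rw [h]
  rw [AddChar.sum_apply_eq_ite f, if_neg hf]

lemma sum_units_chars_pair (χ χ' : AddChar F ℂˣ) (f₀ : F) :
    ∑ f : F, (χ (-f) : ℂ) * (χ' f : ℂ) =
      if χ' = χ then (Fintype.card F : ℂ) else 0 := by
  classical
  have h1 : ∀ f : F, (χ (-f) : ℂ) * (χ' f : ℂ) = (((χ⁻¹ * χ') f : ℂˣ) : ℂ) := by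
    intro f; simp
  simp_rw [h1]
  split_ifs with h
  · subst h
    simp
  · exact sum_units_char_eq_zero _ (by rwa [Ne, inv_mul_eq_one, eq_comm])

lemma sum_chars_apply [DecidableEq F] (f : F) :
    ∑ χ : AddChar F ℂˣ, (χ f : ℂ) =
      if f = 0 then (Fintype.card F : ℂ) else 0 := by
  classical
  split_ifs with h
  · subst h
    simp [card_units_char]
  · exact sum_units_chars_eq_zero f h

end CharAux

theorem AddMonoidAlgebra_single_finset_sum' {R M ι : Type*} [Semiring R] (s : Finset ι)
    (m : M) (g : ι → R) : AddMonoidAlgebra.single m (∑ i ∈ s, g i)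
      = ∑ i ∈ s, AddMonoidAlgebra.single m (g i) :=
  map_sum (AddMonoidAlgebra.singleAddHom m) g s

/-- For a finite abelian group `F` and a commutative additive
monoid `M`, the `ℂ`-algebra homomorphism
`Φ : ℂ[F × M] → ∏_{χ ∈ F̂} ℂ[M]`, determined on basis elements by
`Φ(e_{(f,m)}) = (χ(f) • e_m)_χ`, is bijective. -/
theorem stmt_6 {F M : Type*} [AddCommGroup F] [Fintype F] [AddCommMonoid M]
    (Φ : AddMonoidAlgebra ℂ (F × M) →ₐ[ℂ] (AddChar F ℂˣ → AddMonoidAlgebra ℂ M))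
    (hΦ : ∀ (f : F) (m : M) (χ : AddChar F ℂˣ),
      Φ (AddMonoidAlgebra.single (f, m) 1) χ =
        AddMonoidAlgebra.single m ((χ f : ℂ))) :
    Function.Bijective Φ := by
  classical
  set κ : ℂ := (Fintype.card F : ℂ) with hκdef
  have hκ : κ ≠ 0 := Nat.cast_ne_zero.2 Fintype.card_ne_zero
  -- Φ on general singles
  have hΦ' : ∀ (f : F) (m : M) (c : ℂ) (χ : AddChar F ℂˣ),
      Φ (AddMonoidAlgebra.single (f, m) c) χ =
        AddMonoidAlgebra.single m (c * (χ f : ℂ)) := by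
    intro f m c χ
    have h1 : (AddMonoidAlgebra.single (f, m) c : AddMonoidAlgebra ℂ (F × M))
        = c • AddMonoidAlgebra.single (f, m) 1 := by
      rw [AddMonoidAlgebra.smul_single', mul_one]
    rw [h1, map_smul]
    simp only [Pi.smul_apply, hΦ, AddMonoidAlgebra.smul_single']
  have mapadd : ∀ (f : F) (a b : AddMonoidAlgebra ℂ M),
      AddMonoidAlgebra.mapDomain (R := ℂ) (fun m : M => (f, m)) (a + b)
        = AddMonoidAlgebra.mapDomain (fun m : M => (f, m)) a
          + AddMonoidAlgebra.mapDomain (fun m : M => (f, m)) b :=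
    fun _ a b => AddMonoidAlgebra.mapDomain_add _ a b
  -- The inverse map
  let Ψ : (AddChar F ℂˣ → AddMonoidAlgebra ℂ M) → AddMonoidAlgebra ℂ (F × M) :=
    fun v => κ⁻¹ • ∑ χ : AddChar F ℂˣ, ∑ f : F,
      (χ (-f) : ℂ) • (AddMonoidAlgebra.mapDomain (fun m => (f, m)) (v χ))
  constructor
  · -- injectivity via a left inverse
    have key : ∀ x, Ψ (Φ x) = x := by
      intro x
      induction x using AddMonoidAlgebra.induction_linear with
      | zero => simp [Ψ]
      | add a b ha hb =>
          rw [map_add]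
          have h2 : Ψ (Φ a + Φ b) = Ψ (Φ a) + Ψ (Φ b) := by
            simp only [Ψ, Pi.add_apply, mapadd, smul_add, Finset.sum_add_distrib]
          rw [h2, ha, hb]
      | single p c =>
          obtain ⟨f₀, m₀⟩ := p
          show κ⁻¹ • ∑ χ : AddChar F ℂˣ, ∑ f : F,
              (χ (-f) : ℂ) • (AddMonoidAlgebra.mapDomain (fun m => (f, m))
                (Φ (AddMonoidAlgebra.single (f₀, m₀) c) χ)) = _
          have step1 : ∀ (χ : AddChar F ℂˣ) (f : F),
              (χ (-f) : ℂ) • (AddMonoidAlgebra.mapDomain (fun m : M => (f, m))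
                  (Φ (AddMonoidAlgebra.single (f₀, m₀) c) χ))
              = AddMonoidAlgebra.single (f, m₀) (c * ((χ (-f) : ℂ) * (χ f₀ : ℂ))) := by
            intro χ f
            rw [hΦ' f₀ m₀ c χ, AddMonoidAlgebra.mapDomain_single,
              AddMonoidAlgebra.smul_single']
            congr 1
            ring
          simp_rw [step1]
          rw [Finset.sum_comm]
          have step2 : ∀ f : F,
              (∑ χ : AddChar F ℂˣ,
                AddMonoidAlgebra.single (f, m₀) (c * ((χ (-f) : ℂ) * (χ f₀ : ℂ))))
              = if f = f₀ then AddMonoidAlgebra.single (f, m₀) (c * κ) else 0 := by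
            intro f
            rw [← AddMonoidAlgebra_single_finset_sum', ← Finset.mul_sum]
            have hterm : ∀ χ : AddChar F ℂˣ,
                (χ (-f) : ℂ) * (χ f₀ : ℂ) = (χ (f₀ - f) : ℂ) := by
              intro χ
              rw [sub_eq_add_neg, add_comm, χ.map_add_eq_mul]
              push_cast
              ring
            simp_rw [hterm]
            rw [sum_chars_apply (f₀ - f)]
            by_cases h : f = f₀
            · rw [if_pos h, if_pos (by rw [h, sub_self])]
            · rw [if_neg h, if_neg (fun hc => h (sub_eq_zero.1 hc).symm), mul_zero]
              exact AddMonoidAlgebra.single_zero _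
          simp_rw [step2]
          rw [Finset.sum_ite_eq' Finset.univ f₀
            (fun f => AddMonoidAlgebra.single (f, m₀) (c * κ))]
          rw [if_pos (Finset.mem_univ f₀), AddMonoidAlgebra.smul_single']
          congr 1
          field_simp
    exact Function.LeftInverse.injective key
  · -- surjectivity
    intro v
    have hmem : ∀ (χ : AddChar F ℂˣ) (w : AddMonoidAlgebra ℂ M),
        Pi.single χ w ∈ LinearMap.range Φ.toLinearMap := by
      intro χ w
      induction w using AddMonoidAlgebra.induction_linear with
      | zero =>
          simp only [Pi.single_zero]
          exact zero_mem _
      | add a b ha hb =>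
          simp only [Pi.single_add]
          exact add_mem ha hb
      | single m c =>
          refine ⟨κ⁻¹ • ∑ f : F, (χ (-f) : ℂ) • AddMonoidAlgebra.single (f, m) c, ?_⟩
          rw [map_smul, map_sum]
          simp_rw [map_smul]
          funext χ'
          simp only [Pi.smul_apply, Finset.sum_apply, AlgHom.toLinearMap_apply]
          have h1 : ∀ f : F, (χ (-f) : ℂ) • (Φ (AddMonoidAlgebra.single (f, m) c) χ')
              = AddMonoidAlgebra.single m (c * ((χ (-f) : ℂ) * (χ' f : ℂ))) := by
            intro f
            rw [hΦ', AddMonoidAlgebra.smul_single']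
            congr 1
            ring
          have h2 : ∑ f : F, (χ (-f) : ℂ) • (Φ (AddMonoidAlgebra.single (f, m) c) χ')
              = AddMonoidAlgebra.single m (c * (if χ' = χ then κ else 0)) := by
            simp_rw [h1]
            rw [← AddMonoidAlgebra_single_finset_sum', ← Finset.mul_sum, sum_units_chars_pair χ χ' 0]
          rw [h2, AddMonoidAlgebra.smul_single', Pi.single_apply]
          split_ifs with h
          · congr 1
            field_simp
          · rw [mul_zero, mul_zero]
            exact AddMonoidAlgebra.single_zero _
    obtain ⟨x, hx⟩ := Submodule.sum_mem (LinearMap.range Φ.toLinearMap)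
      (fun χ (_ : χ ∈ Finset.univ) => hmem χ (v χ))
    exact ⟨x, by rw [show Φ x = Φ.toLinearMap x from rfl, hx, Finset.univ_sum_single]⟩
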